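/- Suppose A, G are n×n real matrices, X is invertible with ‖X⁻¹ A G X − diag(I_r, 0)‖₂ = ε < 1 and r = rank(A). Then σ₁(A G) ≤ κ(X)(1+ε) and σ_r(A G) ≥ σ_r(A A^g) − κ(X)·ε, where A^g is the generalized inverse with X⁻¹ A A^g X = diag(I_r, 0); consequently, if κ(X) = 1 then κ(A G) = σ₁(A G)/σ_r(A G) ≤ (1+ε)/(1−ε). -/

import Mathlib

set_option maxHeartbeats 1000000

open scoped Matrix.Norms.L2Operator RealInnerProductSpace

theorem Matrix.isHermitian_transpose_mul_self {m n α : Type*} [CommSemiring α] [StarRing α]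
    [TrivialStar α] [Fintype m] (A : Matrix m n α) : (A.transpose * A).IsHermitian := by
  rw [Matrix.IsHermitian, Matrix.conjTranspose_mul, Matrix.conjTranspose_eq_transpose_of_trivial,
    Matrix.conjTranspose_eq_transpose_of_trivial, Matrix.transpose_transpose]

/-- The n×n block diagonal matrix diag(I_r, 0). -/
def diagIr (n r : ℕ) : Matrix (Fin n) (Fin n) ℝ :=
  Matrix.of fun i j => if i = j ∧ (i : ℕ) < r then (1 : ℝ) else 0

/-- The i-th largest singular value (0-indexed: `i = 0` is the largest) of a real square
matrix, defined as the square root of the i-th largest eigenvalue of MᵀM. -/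
noncomputable def singularValue {n : ℕ} (M : Matrix (Fin n) (Fin n) ℝ) (i : Fin n) : ℝ :=
  Real.sqrt (((Matrix.isHermitian_transpose_mul_self M).eigenvalues ∘
    Tuple.sort (Matrix.isHermitian_transpose_mul_self M).eigenvalues) i.rev)

namespace SVAux
open Matrix

variable {n : ℕ}

lemma inner_L_left (A : Matrix (Fin n) (Fin n) ℝ) (x y : EuclideanSpace ℝ (Fin n)) :
    ⟪Matrix.toEuclideanLin A x, y⟫ = ⟪x, Matrix.toEuclideanLin Aᵀ y⟫ := by
  simp only [toEuclideanLin_apply, PiLp.inner_apply, RCLike.inner_apply, starRingEnd_apply,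
    PiLp.toLp_apply, star_trivial, mulVec, dotProduct,
    transpose_apply, Finset.sum_mul, Finset.mul_sum]
  rw [Finset.sum_comm]
  apply Finset.sum_congr rfl; intro i _; apply Finset.sum_congr rfl; intro j _; ring

noncomputable def svV (M : Matrix (Fin n) (Fin n) ℝ) : Fin n → ℝ :=
  (Matrix.isHermitian_transpose_mul_self M).eigenvalues ∘
    Tuple.sort (Matrix.isHermitian_transpose_mul_self M).eigenvalues

noncomputable def svB (M : Matrix (Fin n) (Fin n) ℝ) :
    OrthonormalBasis (Fin n) ℝ (EuclideanSpace ℝ (Fin n)) :=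
  (Matrix.isHermitian_transpose_mul_self M).eigenvectorBasis.reindex
    (Tuple.sort (Matrix.isHermitian_transpose_mul_self M).eigenvalues).symm

lemma svV_mono (M : Matrix (Fin n) (Fin n) ℝ) : Monotone (svV M) :=
  Tuple.monotone_sort _

lemma L_one_apply (x : EuclideanSpace ℝ (Fin n)) :
    toEuclideanLin (1 : Matrix (Fin n) (Fin n) ℝ) x = x := by
  simp [toEuclideanLin_apply]

lemma mulVec_svB (M : Matrix (Fin n) (Fin n) ℝ) (i : Fin n) :
    (Mᴴ * M) *ᵥ ⇑(svB M i) = svV M i • ⇑(svB M i) := by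
  simpa [svB, OrthonormalBasis.reindex_apply, svV] using
    (Matrix.isHermitian_transpose_mul_self M).mulVec_eigenvectorBasis
      (Tuple.sort (Matrix.isHermitian_transpose_mul_self M).eigenvalues i)

lemma L_svB (M : Matrix (Fin n) (Fin n) ℝ) (i : Fin n) :
    toEuclideanLin (Mᴴ * M) (svB M i) = svV M i • svB M i := by
  apply (WithLp.equiv 2 (Fin n → ℝ)).injective
  simpa [toEuclideanLin_apply] using mulVec_svB M i

lemma L_mul_apply (A B : Matrix (Fin n) (Fin n) ℝ) (x : EuclideanSpace ℝ (Fin n)) :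
    toEuclideanLin (A * B) x = toEuclideanLin A (toEuclideanLin B x) := by
  simp [toEuclideanLin_apply, ← mulVec_mulVec]

lemma transpose_eq_of_herm {H : Matrix (Fin n) (Fin n) ℝ} (h : H.IsHermitian) : Hᵀ = H := by
  rw [← Matrix.conjTranspose_eq_transpose_of_trivial]; exact h

lemma norm_L_sq (M : Matrix (Fin n) (Fin n) ℝ) (x : EuclideanSpace ℝ (Fin n)) :
    ‖toEuclideanLin M x‖ ^ 2 = ∑ i, svV M i * ⟪(svB M i : EuclideanSpace ℝ (Fin n)), x⟫ ^ 2 := by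
  have h0 : ‖toEuclideanLin M x‖ ^ 2 = ⟪x, toEuclideanLin (Mᴴ * M) x⟫ := by
    rw [← real_inner_self_eq_norm_sq, inner_L_left, ← L_mul_apply,
      Matrix.conjTranspose_eq_transpose_of_trivial]
  rw [h0, ← OrthonormalBasis.sum_inner_mul_inner (svB M) x (toEuclideanLin (Mᴴ * M) x)]
  apply Finset.sum_congr rfl
  intro i _
  have h1 : ⟪(svB M i : EuclideanSpace ℝ (Fin n)), toEuclideanLin (Mᴴ * M) x⟫
      = svV M i * ⟪(svB M i : EuclideanSpace ℝ (Fin n)), x⟫ := by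
    have := inner_L_left (Mᴴ * M) (svB M i) x
    rw [transpose_eq_of_herm (H := Mᴴ * M) (by simpa only [Matrix.conjTranspose_eq_transpose_of_trivial] using Matrix.isHermitian_transpose_mul_self M)] at this
    rw [← this, L_svB, real_inner_smul_left]
  rw [h1, real_inner_comm x]
  ring

lemma parseval (b : OrthonormalBasis (Fin n) ℝ (EuclideanSpace ℝ (Fin n)))
    (x : EuclideanSpace ℝ (Fin n)) :
    ∑ i, ⟪(b i : EuclideanSpace ℝ (Fin n)), x⟫ ^ 2 = ‖x‖ ^ 2 := by
  have := b.sum_inner_mul_inner x x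
  rw [real_inner_self_eq_norm_sq] at this
  rw [← this]
  apply Finset.sum_congr rfl
  intro i _
  rw [real_inner_comm x]; ring

lemma inner_eq_zero_of_mem_span {b : OrthonormalBasis (Fin n) ℝ (EuclideanSpace ℝ (Fin n))}
    {S : Set (Fin n)} {x : EuclideanSpace ℝ (Fin n)}
    (hx : x ∈ Submodule.span ℝ (⇑b '' S)) {i : Fin n} (hi : i ∉ S) :
    ⟪(b i : EuclideanSpace ℝ (Fin n)), x⟫ = 0 := by
  induction hx using Submodule.span_induction with
  | mem y hy =>
    obtain ⟨k, hk, rfl⟩ := hy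
    exact b.orthonormal.2 (fun h => hi (h ▸ hk))
  | zero => simp
  | add y z _ _ hy hz => rw [inner_add_right, hy, hz, add_zero]
  | smul c y _ hy => rw [inner_smul_right, hy, mul_zero]

lemma rayleigh_le (M : Matrix (Fin n) (Fin n) ℝ) {S : Set (Fin n)} {c : ℝ}
    (hc : ∀ i ∈ S, svV M i ≤ c) {x : EuclideanSpace ℝ (Fin n)}
    (hx : x ∈ Submodule.span ℝ (⇑(svB M) '' S)) :
    ‖toEuclideanLin M x‖ ^ 2 ≤ c * ‖x‖ ^ 2 := by
  rw [norm_L_sq, ← parseval (svB M) x, Finset.mul_sum]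
  apply Finset.sum_le_sum
  intro i _
  by_cases hi : i ∈ S
  · exact mul_le_mul_of_nonneg_right (hc i hi) (sq_nonneg _)
  · rw [inner_eq_zero_of_mem_span hx hi]; simp

lemma rayleigh_ge (M : Matrix (Fin n) (Fin n) ℝ) {S : Set (Fin n)} {c : ℝ}
    (hc : ∀ i ∈ S, c ≤ svV M i) {x : EuclideanSpace ℝ (Fin n)}
    (hx : x ∈ Submodule.span ℝ (⇑(svB M) '' S)) :
    c * ‖x‖ ^ 2 ≤ ‖toEuclideanLin M x‖ ^ 2 := by
  rw [norm_L_sq, ← parseval (svB M) x, Finset.mul_sum]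
  apply Finset.sum_le_sum
  intro i _
  by_cases hi : i ∈ S
  · exact mul_le_mul_of_nonneg_right (hc i hi) (sq_nonneg _)
  · rw [inner_eq_zero_of_mem_span hx hi]; simp

lemma svB_mem_span (M : Matrix (Fin n) (Fin n) ℝ) {S : Set (Fin n)} {i : Fin n} (hi : i ∈ S) :
    (svB M i : EuclideanSpace ℝ (Fin n)) ∈ Submodule.span ℝ (⇑(svB M) '' S) :=
  Submodule.subset_span ⟨i, hi, rfl⟩

lemma svV_nonneg (M : Matrix (Fin n) (Fin n) ℝ) (i : Fin n) : 0 ≤ svV M i := by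
  have h1 : ‖toEuclideanLin M (svB M i)‖ ^ 2 ≤ svV M i * ‖(svB M i : EuclideanSpace ℝ (Fin n))‖ ^ 2 :=
    rayleigh_le M (S := {i}) (fun j hj => by rw [hj]) (svB_mem_span M rfl)
  have h2 := sq_nonneg ‖toEuclideanLin M (svB M i)‖
  have h3 : ‖(svB M i : EuclideanSpace ℝ (Fin n))‖ = 1 := (svB M).orthonormal.1 i
  rw [h3] at h1; nlinarith

lemma norm_L_le (A : Matrix (Fin n) (Fin n) ℝ) (x : EuclideanSpace ℝ (Fin n)) :
    ‖toEuclideanLin A x‖ ≤ ‖A‖ * ‖x‖ := by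
  rw [l2_opNorm_def]
  exact ((toEuclideanLin.trans LinearMap.toContinuousLinearMap) A).le_opNorm x

lemma norm_le_of (A : Matrix (Fin n) (Fin n) ℝ) {c : ℝ} (hc : 0 ≤ c)
    (h : ∀ x : EuclideanSpace ℝ (Fin n), ‖toEuclideanLin A x‖ ≤ c * ‖x‖) : ‖A‖ ≤ c := by
  rw [l2_opNorm_def]
  exact ContinuousLinearMap.opNorm_le_bound _ hc h

lemma finrank_span_svB (M : Matrix (Fin n) (Fin n) ℝ) (S : Finset (Fin n)) :
    Module.finrank ℝ (Submodule.span ℝ (⇑(svB M) '' (S : Set (Fin n)))) = S.card := by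
  have hli : LinearIndependent ℝ (fun k : (S : Set (Fin n)) => (svB M k : EuclideanSpace ℝ (Fin n))) :=
    (svB M).orthonormal.linearIndependent.comp Subtype.val Subtype.val_injective
  rw [Set.image_eq_range, finrank_span_eq_card hli]
  simp

lemma exists_ne_zero_inf (V W : Submodule ℝ (EuclideanSpace ℝ (Fin n)))
    (h : n < Module.finrank ℝ V + Module.finrank ℝ W) :
    ∃ x, x ∈ V ⊓ W ∧ x ≠ 0 := by
  have h1 := Submodule.finrank_sup_add_finrank_inf_eq V W
  have h2 : Module.finrank ℝ (V ⊔ W : Submodule ℝ (EuclideanSpace ℝ (Fin n))) ≤ n := by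
    simpa using Submodule.finrank_le (V ⊔ W)
  have h3 : 0 < Module.finrank ℝ (V ⊓ W : Submodule ℝ (EuclideanSpace ℝ (Fin n))) := by omega
  rw [Module.finrank_pos_iff] at h3
  obtain ⟨⟨x, hx⟩, hx0⟩ := exists_ne (0 : (V ⊓ W : Submodule ℝ (EuclideanSpace ℝ (Fin n))))
  exact ⟨x, hx, fun h => hx0 (Subtype.ext h)⟩

lemma le_sqrt_svV (M : Matrix (Fin n) (Fin n) ℝ) (j : Fin n) (c : ℝ)
    (V : Submodule ℝ (EuclideanSpace ℝ (Fin n)))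
    (hdim : n < Module.finrank ℝ V + ((j : ℕ) + 1))
    (hV : ∀ x ∈ V, c * ‖x‖ ≤ ‖toEuclideanLin M x‖) :
    c ≤ Real.sqrt (svV M j) := by
  set W := Submodule.span ℝ (⇑(svB M) '' ((Finset.Iic j : Finset (Fin n)) : Set (Fin n))) with hWdef
  have hW : Module.finrank ℝ W = (j : ℕ) + 1 := by
    rw [hWdef, finrank_span_svB, Fin.card_Iic]
  obtain ⟨x, hx, hx0⟩ := exists_ne_zero_inf V W (by omega)
  have hxV : x ∈ V := hx.1
  have hxW : x ∈ W := hx.2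
  have h1 : ‖toEuclideanLin M x‖ ^ 2 ≤ svV M j * ‖x‖ ^ 2 :=
    rayleigh_le M (fun i hi => Tuple.monotone_sort _ (Finset.mem_Iic.mp hi)) hxW
  have h2 := hV x hxV
  have h3 : ‖toEuclideanLin M x‖ ≤ Real.sqrt (svV M j) * ‖x‖ := by
    have h4 := Real.sqrt_le_sqrt h1
    rwa [Real.sqrt_sq (norm_nonneg _), Real.sqrt_mul (svV_nonneg M j),
      Real.sqrt_sq (norm_nonneg _)] at h4
  have hxn : 0 < ‖x‖ := norm_pos_iff.mpr hx0
  exact le_of_mul_le_mul_right (h2.trans h3) hxn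

lemma sqrt_le_norm_L {M : Matrix (Fin n) (Fin n) ℝ} {j : Fin n} {x : EuclideanSpace ℝ (Fin n)}
    (hx : x ∈ Submodule.span ℝ (⇑(svB M) '' ((Finset.Ici j : Finset (Fin n)) : Set (Fin n)))) :
    Real.sqrt (svV M j) * ‖x‖ ≤ ‖toEuclideanLin M x‖ := by
  have h1 : svV M j * ‖x‖ ^ 2 ≤ ‖toEuclideanLin M x‖ ^ 2 :=
    rayleigh_ge M (fun i hi => Tuple.monotone_sort _ (Finset.mem_Ici.mp hi)) hx
  have h4 := Real.sqrt_le_sqrt h1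
  rwa [Real.sqrt_sq (norm_nonneg _), Real.sqrt_mul (svV_nonneg M j),
    Real.sqrt_sq (norm_nonneg _)] at h4

lemma weyl (M N : Matrix (Fin n) (Fin n) ℝ) (j : Fin n) :
    Real.sqrt (svV M j) - ‖M - N‖ ≤ Real.sqrt (svV N j) := by
  apply le_sqrt_svV N j _
    (Submodule.span ℝ (⇑(svB M) '' ((Finset.Ici j : Finset (Fin n)) : Set (Fin n))))
  · rw [finrank_span_svB, Fin.card_Ici]
    have := j.isLt
    omega
  · intro x hx
    have h1 := sqrt_le_norm_L hx
    have h2 : ‖toEuclideanLin M x - toEuclideanLin N x‖ ≤ ‖M - N‖ * ‖x‖ := by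
      have e : toEuclideanLin (M - N) x = toEuclideanLin M x - toEuclideanLin N x := by
        rw [map_sub]; rfl
      rw [← e]; exact norm_L_le _ x
    have h3 : ‖toEuclideanLin M x‖ - ‖toEuclideanLin N x‖ ≤ ‖toEuclideanLin M x - toEuclideanLin N x‖ :=
      norm_sub_norm_le _ _
    nlinarith [norm_nonneg x, norm_nonneg (M - N)]

lemma span_svB_top (M : Matrix (Fin n) (Fin n) ℝ) {x : EuclideanSpace ℝ (Fin n)} :
    x ∈ Submodule.span ℝ (⇑(svB M) '' (Set.univ : Set (Fin n))) := by
  rw [Set.image_univ]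
  have h := Module.Basis.span_eq (svB M).toBasis
  rw [OrthonormalBasis.coe_toBasis] at h
  rw [h]; trivial

lemma sqrt_svV_le_norm (M : Matrix (Fin n) (Fin n) ℝ) (j : Fin n) :
    Real.sqrt (svV M j) ≤ ‖M‖ := by
  have h1 := sqrt_le_norm_L (M := M) (j := j) (x := svB M j)
    (svB_mem_span M (Finset.mem_coe.mpr (Finset.mem_Ici.mpr le_rfl)))
  have h3 : ‖(svB M j : EuclideanSpace ℝ (Fin n))‖ = 1 := (svB M).orthonormal.1 j
  rw [h3, mul_one] at h1
  calc Real.sqrt (svV M j) ≤ ‖toEuclideanLin M (svB M j)‖ := h1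
    _ ≤ ‖M‖ * ‖(svB M j : EuclideanSpace ℝ (Fin n))‖ := norm_L_le M _
    _ = ‖M‖ := by rw [h3, mul_one]

lemma norm_le_sqrt_svV (hn : 0 < n) (M : Matrix (Fin n) (Fin n) ℝ) :
    ‖M‖ ≤ Real.sqrt (svV M ⟨n - 1, Nat.sub_lt hn Nat.one_pos⟩) := by
  apply norm_le_of M (Real.sqrt_nonneg _)
  intro x
  have h1 : ‖toEuclideanLin M x‖ ^ 2 ≤ svV M ⟨n - 1, Nat.sub_lt hn Nat.one_pos⟩ * ‖x‖ ^ 2 := by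
    apply rayleigh_le M (S := Set.univ) _ (span_svB_top M)
    intro i _
    exact Tuple.monotone_sort _ (by rw [Fin.le_def]; simp; omega)
  have h4 := Real.sqrt_le_sqrt h1
  rwa [Real.sqrt_sq (norm_nonneg _), Real.sqrt_mul (svV_nonneg M _),
    Real.sqrt_sq (norm_nonneg _)] at h4

lemma sqrt_svV_bot_mul_le (hn : 0 < n) (M : Matrix (Fin n) (Fin n) ℝ)
    (x : EuclideanSpace ℝ (Fin n)) :
    Real.sqrt (svV M ⟨0, hn⟩) * ‖x‖ ≤ ‖toEuclideanLin M x‖ := by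
  have h1 : svV M ⟨0, hn⟩ * ‖x‖ ^ 2 ≤ ‖toEuclideanLin M x‖ ^ 2 := by
    apply rayleigh_ge M (S := Set.univ) _ (span_svB_top M)
    intro i _
    exact Tuple.monotone_sort _ (by rw [Fin.le_def]; simp)
  have h4 := Real.sqrt_le_sqrt h1
  rwa [Real.sqrt_sq (norm_nonneg _), Real.sqrt_mul (svV_nonneg M _),
    Real.sqrt_sq (norm_nonneg _)] at h4

lemma svV_pos (hn : 0 < n) {X : Matrix (Fin n) (Fin n) ℝ} (hX : IsUnit X) (j : Fin n) :
    0 < svV X j := by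
  rcases (svV_nonneg X j).lt_or_eq with h | h
  · exact h
  exfalso
  have hH : IsUnit (Xᴴ * X) := by
    have := hX.star
    rw [Matrix.star_eq_conjTranspose] at this
    exact this.mul hX
  have h0 : (Xᴴ * X) *ᵥ ⇑(svB X j) = 0 := by
    rw [mulVec_svB, ← h, zero_smul]
  have hdet : IsUnit (Xᴴ * X).det := (Matrix.isUnit_iff_isUnit_det _).mp hH
  have h1 : ⇑(svB X j) = 0 := by
    have h2 : (Xᴴ * X)⁻¹ *ᵥ ((Xᴴ * X) *ᵥ ⇑(svB X j)) = 0 := by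
      rw [h0, Matrix.mulVec_zero]
    rwa [Matrix.mulVec_mulVec, Matrix.nonsing_inv_mul _ hdet, Matrix.one_mulVec] at h2
  have h3 : ‖(svB X j : EuclideanSpace ℝ (Fin n))‖ = 1 := (svB X).orthonormal.1 j
  have h4 : (svB X j : EuclideanSpace ℝ (Fin n)) = 0 := by
    ext i
    exact congrFun h1 i
  rw [h4, norm_zero] at h3
  simp at h3

lemma diagIr_eq_diagonal (r : ℕ) :
    diagIr n r = Matrix.diagonal (fun i : Fin n => if (i : ℕ) < r then (1 : ℝ) else 0) := by
  ext i j
  by_cases h : i = j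
  · subst h; by_cases h2 : (i : ℕ) < r <;> simp [diagIr, h2, Matrix.diagonal_apply_eq]
  · simp [diagIr, h, Matrix.diagonal_apply_ne _ h]

lemma diagIr_mul_self (r : ℕ) : diagIr n r * diagIr n r = diagIr n r := by
  rw [diagIr_eq_diagonal, Matrix.diagonal_mul_diagonal]
  ext i j
  by_cases h : i = j
  · subst h; by_cases h2 : (i : ℕ) < r <;> simp [h2]
  · simp [Matrix.diagonal_apply_ne _ h]

lemma norm_diagIr_le (r : ℕ) : ‖diagIr n r‖ ≤ 1 := by
  apply norm_le_of _ zero_le_one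
  intro x
  rw [one_mul]
  have hcoord : ∀ i : Fin n, (toEuclideanLin (diagIr n r) x) i
      = if (i : ℕ) < r then x i else 0 := by
    intro i
    rw [diagIr_eq_diagonal]
    simp only [toEuclideanLin_apply, PiLp.toLp_apply, Matrix.mulVec_diagonal]
    by_cases h : (i : ℕ) < r <;> simp [h, PiLp.toLp_apply]
  rw [EuclideanSpace.norm_eq, EuclideanSpace.norm_eq]
  apply Real.sqrt_le_sqrt
  apply Finset.sum_le_sum
  intro i _
  rw [hcoord i]
  by_cases h : (i : ℕ) < r <;> simp [h]
  positivity

lemma rank_diagIr (r : ℕ) (hrn : r ≤ n) : (diagIr n r).rank = r := by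
  rw [diagIr_eq_diagonal, Matrix.rank_diagonal]
  have e : {i : Fin n // (if (i : ℕ) < r then (1 : ℝ) else 0) ≠ 0} ≃ Fin r := by
    apply Equiv.trans (Equiv.subtypeEquivRight (q := fun i : Fin n => (i : ℕ) < r) ?_)
    · exact ⟨fun i => ⟨i.1, i.2⟩, fun k => ⟨⟨k.1, lt_of_lt_of_le k.2 hrn⟩, k.2⟩,
        fun i => by ext; rfl, fun k => by ext; rfl⟩
    · intro i
      by_cases h : (i : ℕ) < r <;> simp [h]
  rw [Fintype.card_congr e, Fintype.card_fin]

lemma finrank_range_L (B : Matrix (Fin n) (Fin n) ℝ) :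
    Module.finrank ℝ (LinearMap.range (toEuclideanLin B)) = B.rank := by
  have he : (toEuclideanLin B : EuclideanSpace ℝ (Fin n) →ₗ[ℝ] EuclideanSpace ℝ (Fin n))
      = ((WithLp.linearEquiv 2 ℝ (Fin n → ℝ)).symm : (Fin n → ℝ) →ₗ[ℝ] EuclideanSpace ℝ (Fin n)).comp
        (B.mulVecLin.comp ((WithLp.linearEquiv 2 ℝ (Fin n → ℝ)) : EuclideanSpace ℝ (Fin n) →ₗ[ℝ] (Fin n → ℝ))) := by
    ext x
    rfl
  rw [he, LinearMap.range_comp, LinearMap.range_comp, LinearEquiv.range, Submodule.map_top,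
    LinearEquiv.finrank_map_eq]
  rfl

lemma sqrt_svV_proj_ge_one {P : Matrix (Fin n) (Fin n) ℝ} (hP : P * P = P) (j : Fin n)
    (hdim : n < P.rank + ((j : ℕ) + 1)) : 1 ≤ Real.sqrt (svV P j) := by
  apply le_sqrt_svV P j 1 (LinearMap.range (toEuclideanLin P))
  · rw [finrank_range_L]; exact hdim
  · rintro x ⟨y, rfl⟩
    have h : toEuclideanLin P (toEuclideanLin P y) = toEuclideanLin P y := by
      rw [← L_mul_apply, hP]
    rw [h, one_mul]

lemma singularValue_eq_sqrt_svV (M : Matrix (Fin n) (Fin n) ℝ) (i : Fin n) :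
    singularValue M i = Real.sqrt (svV M i.rev) := rfl

end SVAux

open SVAux Matrix in
/-- If ‖X⁻¹ A G X − diag(I_r, 0)‖₂ = ε < 1 with X invertible and r = rank(A), then
σ₁(A G) ≤ κ(X)(1+ε), σ_r(A G) ≥ σ_r(A A^g) − κ(X)·ε (where A^g is the generalized inverse
with X⁻¹ A A^g X = diag(I_r, 0)); consequently, if κ(X) = 1 then
κ(A G) = σ₁(A G)/σ_r(A G) ≤ (1+ε)/(1−ε). -/
theorem stmt17 {n : ℕ} (hn : 0 < n) (A G X Ag : Matrix (Fin n) (Fin n) ℝ) (ε : ℝ)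
    (hX : IsUnit X)
    (hε : ‖X⁻¹ * (A * G) * X - diagIr n A.rank‖ = ε) (hε1 : ε < 1)
    (hAg : X⁻¹ * (A * Ag) * X = diagIr n A.rank) :
    singularValue (A * G) ⟨0, hn⟩ ≤
      singularValue X ⟨0, hn⟩ / singularValue X ⟨n - 1, by omega⟩ * (1 + ε) ∧
    (∀ i : Fin n, (i : ℕ) + 1 = A.rank →
      singularValue (A * Ag) i - singularValue X ⟨0, hn⟩ / singularValue X ⟨n - 1, by omega⟩ * ε ≤
        singularValue (A * G) i) ∧
    (singularValue X ⟨0, hn⟩ / singularValue X ⟨n - 1, by omega⟩ = 1 →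
      ∀ i : Fin n, (i : ℕ) + 1 = A.rank →
        singularValue (A * G) ⟨0, hn⟩ / singularValue (A * G) i ≤ (1 + ε) / (1 - ε)) := by
  have hdet : IsUnit X.det := (Matrix.isUnit_iff_isUnit_det X).mp hX
  have hX1 : X * X⁻¹ = 1 := Matrix.mul_nonsing_inv X hdet
  have hX2 : X⁻¹ * X = 1 := Matrix.nonsing_inv_mul X hdet
  have hε0 : 0 ≤ ε := hε ▸ norm_nonneg _
  set b := Real.sqrt (svV X ⟨n - 1, by omega⟩) with hbdef
  set s := Real.sqrt (svV X ⟨0, hn⟩) with hsdef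
  have hs : 0 < s := Real.sqrt_pos.mpr (svV_pos hn hX _)
  have hsb : s ≤ b := Real.sqrt_le_sqrt (svV_mono X (by rw [Fin.le_def]; simp))
  have hb : 0 < b := lt_of_lt_of_le hs hsb
  have hrev0 : (⟨0, hn⟩ : Fin n).rev = ⟨n - 1, by omega⟩ := by
    ext; simp [Fin.val_rev]
  have hrevlast : (⟨n - 1, by omega⟩ : Fin n).rev = ⟨0, hn⟩ := by
    ext; simp [Fin.val_rev]; omega
  have hsvX0 : singularValue X ⟨0, hn⟩ = b := by
    rw [singularValue_eq_sqrt_svV, hrev0]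
  have hsvXlast : singularValue X ⟨n - 1, by omega⟩ = s := by
    rw [singularValue_eq_sqrt_svV, hrevlast]
  have hXn : ‖X‖ ≤ b := norm_le_sqrt_svV hn X
  have hXinv : ‖X⁻¹‖ ≤ s⁻¹ := by
    apply norm_le_of _ (by positivity)
    intro y
    have h1 := sqrt_svV_bot_mul_le hn X (toEuclideanLin X⁻¹ y)
    rw [← L_mul_apply, hX1, L_one_apply] at h1
    rw [inv_mul_eq_div, le_div_iff₀ hs, mul_comm]
    exact h1
  have hmid : ‖X⁻¹ * (A * G) * X‖ ≤ 1 + ε := by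
    have hsplit : X⁻¹ * (A * G) * X
        = diagIr n A.rank + (X⁻¹ * (A * G) * X - diagIr n A.rank) := by abel
    calc ‖X⁻¹ * (A * G) * X‖
        = ‖diagIr n A.rank + (X⁻¹ * (A * G) * X - diagIr n A.rank)‖ := by rw [← hsplit]
      _ ≤ ‖diagIr n A.rank‖ + ‖X⁻¹ * (A * G) * X - diagIr n A.rank‖ := norm_add_le _ _
      _ ≤ 1 + ε := add_le_add (norm_diagIr_le _) (le_of_eq hε)
  have hfactAG : A * G = X * (X⁻¹ * (A * G) * X) * X⁻¹ := by
    calc A * G = 1 * (A * G) * 1 := by rw [one_mul, mul_one]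
      _ = (X * X⁻¹) * (A * G) * (X * X⁻¹) := by rw [hX1]
      _ = X * (X⁻¹ * (A * G) * X) * X⁻¹ := by simp only [Matrix.mul_assoc]
  have hAGnorm : ‖A * G‖ ≤ b * (1 + ε) * s⁻¹ := by
    calc ‖A * G‖ = ‖X * (X⁻¹ * (A * G) * X) * X⁻¹‖ := by rw [← hfactAG]
      _ ≤ ‖X * (X⁻¹ * (A * G) * X)‖ * ‖X⁻¹‖ := Matrix.l2_opNorm_mul _ _
      _ ≤ (‖X‖ * ‖X⁻¹ * (A * G) * X‖) * ‖X⁻¹‖ :=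
          mul_le_mul_of_nonneg_right (Matrix.l2_opNorm_mul _ _) (norm_nonneg _)
      _ ≤ (b * (1 + ε)) * s⁻¹ := by
          apply mul_le_mul _ hXinv (norm_nonneg _) (by positivity)
          exact mul_le_mul hXn hmid (norm_nonneg _) hb.le
  have hAAg : A * Ag = X * diagIr n A.rank * X⁻¹ := by
    calc A * Ag = 1 * (A * Ag) * 1 := by rw [one_mul, mul_one]
      _ = (X * X⁻¹) * (A * Ag) * (X * X⁻¹) := by rw [hX1]
      _ = X * (X⁻¹ * (A * Ag) * X) * X⁻¹ := by simp only [Matrix.mul_assoc]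
      _ = X * diagIr n A.rank * X⁻¹ := by rw [hAg]
  have hdiff : ‖(A * Ag) - (A * G)‖ ≤ b * ε * s⁻¹ := by
    have h1 : (A * Ag) - (A * G)
        = X * (diagIr n A.rank - X⁻¹ * (A * G) * X) * X⁻¹ := by
      rw [hAAg]
      conv_lhs => rw [hfactAG]
      rw [Matrix.mul_sub, Matrix.sub_mul]
    calc ‖(A * Ag) - (A * G)‖
        = ‖X * (diagIr n A.rank - X⁻¹ * (A * G) * X) * X⁻¹‖ := by rw [h1]
      _ ≤ ‖X * (diagIr n A.rank - X⁻¹ * (A * G) * X)‖ * ‖X⁻¹‖ := Matrix.l2_opNorm_mul _ _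
      _ ≤ (‖X‖ * ‖diagIr n A.rank - X⁻¹ * (A * G) * X‖) * ‖X⁻¹‖ :=
          mul_le_mul_of_nonneg_right (Matrix.l2_opNorm_mul _ _) (norm_nonneg _)
      _ ≤ (b * ε) * s⁻¹ := by
          apply mul_le_mul _ hXinv (norm_nonneg _) (by positivity)
          apply mul_le_mul hXn _ (norm_nonneg _) hb.le
          rw [norm_sub_rev]
          exact le_of_eq hε
  have part1 : singularValue (A * G) ⟨0, hn⟩ ≤
      singularValue X ⟨0, hn⟩ / singularValue X ⟨n - 1, by omega⟩ * (1 + ε) := by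
    rw [hsvX0, hsvXlast]
    have h1 : singularValue (A * G) ⟨0, hn⟩ ≤ ‖A * G‖ := by
      rw [singularValue_eq_sqrt_svV, hrev0]
      exact sqrt_svV_le_norm _ _
    have h2 : b * (1 + ε) * s⁻¹ = b / s * (1 + ε) := by rw [div_eq_mul_inv]; ring
    linarith [hAGnorm]
  have part2 : ∀ i : Fin n,
      singularValue (A * Ag) i - singularValue X ⟨0, hn⟩ / singularValue X ⟨n - 1, by omega⟩ * ε ≤
        singularValue (A * G) i := by
    intro i
    rw [hsvX0, hsvXlast]
    have h1 : singularValue (A * Ag) i - ‖A * Ag - A * G‖ ≤ singularValue (A * G) i :=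
      weyl (A * Ag) (A * G) i.rev
    have h2 : b * ε * s⁻¹ = b / s * ε := by rw [div_eq_mul_inv]; ring
    linarith [hdiff]
  refine ⟨part1, fun i _ => part2 i, ?_⟩
  intro hκ i hi
  have hbs : b = s := by
    rw [hsvX0, hsvXlast, div_eq_one_iff_eq hs.ne'] at hκ
    exact hκ
  have hκ' : singularValue X ⟨0, hn⟩ / singularValue X ⟨n - 1, by omega⟩ = 1 := by
    rw [hsvX0, hsvXlast, hbs, div_self hs.ne']
  -- σ_i(A Ag) ≥ 1
  have hPP : (A * Ag) * (A * Ag) = A * Ag := by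
    rw [hAAg]
    have : X * diagIr n A.rank * X⁻¹ * (X * diagIr n A.rank * X⁻¹)
        = X * (diagIr n A.rank * (X⁻¹ * X) * diagIr n A.rank) * X⁻¹ := by
      simp only [Matrix.mul_assoc]
    rw [this, hX2, mul_one, diagIr_mul_self]
  have hrankD : (diagIr n A.rank).rank = A.rank := rank_diagIr _ (by omega)
  have hranklow : A.rank ≤ (A * Ag).rank := by
    have h1 : (diagIr n A.rank).rank ≤ (X⁻¹ * (A * Ag)).rank := by
      rw [← hAg]
      exact Matrix.rank_mul_le_left _ _
    have h2 : (X⁻¹ * (A * Ag)).rank ≤ (A * Ag).rank := Matrix.rank_mul_le_right _ _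
    omega
  have hAAg1 : (1 : ℝ) ≤ singularValue (A * Ag) i := by
    rw [singularValue_eq_sqrt_svV]
    apply sqrt_svV_proj_ge_one hPP
    have := i.isLt
    rw [Fin.val_rev]
    omega
  have hAGi : 1 - ε ≤ singularValue (A * G) i := by
    have := part2 i
    rw [hκ', one_mul] at this
    linarith
  have hAG0 : singularValue (A * G) ⟨0, hn⟩ ≤ 1 + ε := by
    have := part1
    rw [hκ', one_mul] at this
    exact this
  exact div_le_div₀ (by linarith) hAG0 (by linarith) hAGi
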